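/- (Lemma 2.) With probability one, liminf_{T→∞} inf over {a : ‖a‖=1} of λ_min( F_{k₁,k₂}(a)' F_{k₁,k₂}(a) / (T−(k₁+k₂)) ) ≥ inf over {a : ‖a‖=1} of λ_min(S(a)), where λ_min denotes the smallest eigenvalue of a symmetric matrix. -/

import Mathlib

set_option linter.unusedSectionVars false
set_option linter.unnecessarySimpa false
set_option linter.unusedVariables false
set_option maxHeartbeats 1000000


open MeasureTheory Filter

noncomputable section

namespace ODPC

variable {Ω : Type*} [MeasurableSpace Ω]

/-- Frobenius norm of a real matrix. -/
def frob {ι κ : Type*} [Fintype ι] [Fintype κ] (M : Matrix ι κ ℝ) : ℝ :=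
  Real.sqrt (∑ i, ∑ j, (M i j) ^ 2)

/-- Smallest eigenvalue of a symmetric real matrix, via the Rayleigh quotient. -/
def lambdaMin {n : ℕ} (M : Matrix (Fin n) (Fin n) ℝ) : ℝ :=
  ⨅ x : { x : EuclideanSpace ℝ (Fin n) // ‖x‖ = 1 }, ∑ i, ∑ j, x.1 i * M i j * x.1 j

/-- Largest eigenvalue of a symmetric real matrix, via the Rayleigh quotient. -/
def lambdaMax {n : ℕ} (M : Matrix (Fin n) (Fin n) ℝ) : ℝ :=
  ⨆ x : { x : EuclideanSpace ℝ (Fin n) // ‖x‖ = 1 }, ∑ i, ∑ j, x.1 i * M i j * x.1 j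

variable (m k₁ k₂ : ℕ)

/-- The stationary process `z_t = Z ∘ τ^t`. -/
def zproc (Z : Ω → EuclideanSpace ℝ (Fin m)) (τ : Ω → Ω) (t : ℕ) (ω : Ω) :
    EuclideanSpace ℝ (Fin m) := Z (τ^[t] ω)

/-- The one-sided dynamic principal component `f_t(a) = a'x_t`,
where `x_t = (z_t', …, z_{t-k₁}')`. -/
def comp (Z : Ω → EuclideanSpace ℝ (Fin m)) (τ : Ω → Ω)
    (a : EuclideanSpace ℝ (Fin (k₁ + 1) × Fin m)) (t : ℕ) (ω : Ω) : ℝ :=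
  ∑ h : Fin (k₁ + 1), ∑ j : Fin m, a (h, j) * zproc m Z τ (t - h.1) ω j

/-- Reconstruction `z_t^R(a,D)`: the first row of `D` is the intercept `α`, the
remaining rows are the loadings `B`. -/
def recon (Z : Ω → EuclideanSpace ℝ (Fin m)) (τ : Ω → Ω)
    (a : EuclideanSpace ℝ (Fin (k₁ + 1) × Fin m))
    (D : Matrix (Fin (k₂ + 2)) (Fin m) ℝ) (t : ℕ) (ω : Ω) :
    EuclideanSpace ℝ (Fin m) :=
  (WithLp.equiv 2 (Fin m → ℝ)).symm fun j =>
    D 0 j + ∑ h : Fin (k₂ + 1), D h.succ j * comp m k₁ Z τ a (t - h.1) ω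

/-- Population mean squared reconstruction error `MSE₀(a,D)`. -/
def MSE₀ (μ : Measure Ω) (Z : Ω → EuclideanSpace ℝ (Fin m)) (τ : Ω → Ω)
    (a : EuclideanSpace ℝ (Fin (k₁ + 1) × Fin m))
    (D : Matrix (Fin (k₂ + 2)) (Fin m) ℝ) : ℝ :=
  ∫ ω, ‖zproc m Z τ (k₁ + k₂) ω - recon m k₁ k₂ Z τ a D (k₁ + k₂) ω‖ ^ 2 ∂μ

/-- Sample mean squared reconstruction error `MSE_T(a,D)`. -/
def MSE (Z : Ω → EuclideanSpace ℝ (Fin m)) (τ : Ω → Ω) (T : ℕ)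
    (a : EuclideanSpace ℝ (Fin (k₁ + 1) × Fin m))
    (D : Matrix (Fin (k₂ + 2)) (Fin m) ℝ) (ω : Ω) : ℝ :=
  ((T : ℝ) - (k₁ + k₂))⁻¹ *
    ∑ t ∈ Finset.Ioc (k₁ + k₂) T,
      ‖zproc m Z τ t ω - recon m k₁ k₂ Z τ a D t ω‖ ^ 2

/-- Condition 1: no deterministic linear relation between `f_t(a), …, f_{t-k₂}(a)`
and a constant, uniformly over unit vectors `a`. -/
def Condition1 (μ : Measure Ω) (Z : Ω → EuclideanSpace ℝ (Fin m)) (τ : Ω → Ω) : Prop :=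
  ∃ η : ℝ, η < 1 ∧
    ∀ a : EuclideanSpace ℝ (Fin (k₁ + 1) × Fin m), ‖a‖ = 1 →
      ∀ v : Fin (k₂ + 2) → ℝ, v ≠ 0 →
        (μ {ω | ∑ h : Fin (k₂ + 1),
            v h.castSucc * comp m k₁ Z τ a (k₁ + k₂ - h.1) ω
              = v (Fin.last (k₂ + 1))}).toReal ≤ η

/-- The row `w_t(a) = (1, f_t(a), f_{t-1}(a), …, f_{t-k₂}(a))`. -/
def wvec (Z : Ω → EuclideanSpace ℝ (Fin m)) (τ : Ω → Ω)
    (a : EuclideanSpace ℝ (Fin (k₁ + 1) × Fin m)) (t : ℕ) (i : Fin (k₂ + 2)) (ω : Ω) : ℝ :=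
  if i.1 = 0 then 1 else comp m k₁ Z τ a (t - (i.1 - 1)) ω

/-- The population second-moment matrix `S(a) = 𝔼[w_t(a) w_t(a)']`. -/
def Smat (μ : Measure Ω) (Z : Ω → EuclideanSpace ℝ (Fin m)) (τ : Ω → Ω)
    (a : EuclideanSpace ℝ (Fin (k₁ + 1) × Fin m)) :
    Matrix (Fin (k₂ + 2)) (Fin (k₂ + 2)) ℝ :=
  fun i i' => ∫ ω, wvec m k₁ k₂ Z τ a (k₁ + k₂) i ω * wvec m k₁ k₂ Z τ a (k₁ + k₂) i' ω ∂μ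

/-- The sample second-moment matrix `F_{k₁,k₂}(a)'F_{k₁,k₂}(a)/(T-(k₁+k₂))`. -/
def Ssamp (Z : Ω → EuclideanSpace ℝ (Fin m)) (τ : Ω → Ω) (T : ℕ)
    (a : EuclideanSpace ℝ (Fin (k₁ + 1) × Fin m)) (ω : Ω) :
    Matrix (Fin (k₂ + 2)) (Fin (k₂ + 2)) ℝ :=
  fun i i' => ((T : ℝ) - (k₁ + k₂))⁻¹ *
    ∑ t ∈ Finset.Ioc (k₁ + k₂) T, wvec m k₁ k₂ Z τ a t i ω * wvec m k₁ k₂ Z τ a t i' ω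

/-- The set `𝓘` of minimizers of the population MSE. -/
def minimizers (μ : Measure Ω) (Z : Ω → EuclideanSpace ℝ (Fin m)) (τ : Ω → Ω) :
    Set ((EuclideanSpace ℝ (Fin (k₁ + 1) × Fin m)) × Matrix (Fin (k₂ + 2)) (Fin m) ℝ) :=
  {p | ‖p.1‖ = 1 ∧ ∀ a D, ‖a‖ = 1 → MSE₀ m k₁ k₂ μ Z τ p.1 p.2 ≤ MSE₀ m k₁ k₂ μ Z τ a D}

/-- The distance `d((a,D), 𝓘)`. -/
def distToMinimizers (μ : Measure Ω) (Z : Ω → EuclideanSpace ℝ (Fin m)) (τ : Ω → Ω)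
    (a : EuclideanSpace ℝ (Fin (k₁ + 1) × Fin m))
    (D : Matrix (Fin (k₂ + 2)) (Fin m) ℝ) : ℝ :=
  ⨅ p : minimizers m k₁ k₂ μ Z τ, (‖a - p.1.1‖ + frob (D - p.1.2))




section BirkhoffAux

variable {μ : Measure Ω} [IsProbabilityMeasure μ] {τ : Ω → Ω} {g : Ω → ℝ}

/-- Birkhoff sums. -/
def bS (τ : Ω → Ω) (g : Ω → ℝ) (n : ℕ) (ω : Ω) : ℝ := ∑ k ∈ Finset.range n, g (τ^[k] ω)

lemma bS_succ (n : ℕ) (ω : Ω) : bS τ g (n + 1) ω = g ω + bS τ g n (τ ω) := by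
  simp only [bS, Finset.sum_range_succ']
  simp [Function.iterate_succ_apply, add_comm]

lemma bS_integrable (hτ : MeasurePreserving τ μ μ) (hg : Integrable g μ) (n : ℕ) :
    Integrable (bS τ g n) μ := by
  refine integrable_finset_sum _ fun k _ => ?_
  exact ((hτ.iterate k).integrable_comp hg.aestronglyMeasurable).2 hg

lemma bS_measurable (hτ : Measurable τ) (hgm : Measurable g) (n : ℕ) :
    Measurable (bS τ g n) := by
  refine Finset.measurable_sum _ fun k _ => hgm.comp (hτ.iterate k)

/-- Running maximum of Birkhoff sums `max_{0 ≤ k ≤ N} S_k`. -/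
def bM (τ : Ω → Ω) (g : Ω → ℝ) : ℕ → Ω → ℝ
  | 0 => fun _ => 0
  | (N + 1) => fun ω => max (bM τ g N ω) (bS τ g (N + 1) ω)

lemma bM_nonneg (N : ℕ) (ω : Ω) : 0 ≤ bM τ g N ω := by
  induction N with
  | zero => simp [bM]
  | succ N ih => exact le_trans ih (le_max_left _ _)

lemma bS_le_bM {n N : ℕ} (h : n ≤ N) (ω : Ω) : bS τ g n ω ≤ bM τ g N ω := by
  induction N with
  | zero => interval_cases n; simp [bS, bM]
  | succ N ih =>
    rcases Nat.lt_or_ge n (N + 1) with h' | h'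
    · exact le_trans (ih (Nat.lt_succ_iff.mp h')) (le_max_left _ _)
    · have : n = N + 1 := le_antisymm h h'
      subst this; exact le_max_right _ _
lemma bM_exists (N : ℕ) (ω : Ω) : ∃ n ≤ N, bM τ g N ω = bS τ g n ω := by
  induction N with
  | zero => exact ⟨0, le_rfl, by simp [bM, bS]⟩
  | succ N ih =>
    obtain ⟨n, hn, hEq⟩ := ih
    rcases max_cases (bM τ g N ω) (bS τ g (N + 1) ω) with ⟨h1, _⟩ | ⟨h1, _⟩
    · exact ⟨n, hn.trans (Nat.le_succ N), by show max _ _ = _; rw [h1, hEq]⟩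
    · exact ⟨N + 1, le_rfl, by show max _ _ = _; rw [h1]⟩

lemma bM_integrable (hτ : MeasurePreserving τ μ μ) (hg : Integrable g μ) (N : ℕ) :
    Integrable (bM τ g N) μ := by
  induction N with
  | zero => simpa [bM] using integrable_const (0 : ℝ)
  | succ N ih => exact ih.sup (bS_integrable hτ hg (N + 1))

lemma bM_measurable (hτ : Measurable τ) (hgm : Measurable g) (N : ℕ) :
    Measurable (bM τ g N) := by
  induction N with
  | zero => simpa [bM] using measurable_const
  | succ N ih => exact ih.max (bS_measurable hτ hgm (N + 1))

lemma bM_mono {N N' : ℕ} (h : N ≤ N') (ω : Ω) : bM τ g N ω ≤ bM τ g N' ω := by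
  induction N' with
  | zero => simpa [Nat.le_zero.mp h] using le_rfl
  | succ N' ih =>
    rcases Nat.lt_or_ge N (N' + 1) with h' | h'
    · exact le_trans (ih (Nat.lt_succ_iff.mp h')) (le_max_left _ _)
    · have : N = N' + 1 := le_antisymm h h'
      subst this; exact le_rfl

/-- The maximal ergodic theorem (Garsia's argument). -/
lemma maximal_ergodic (hτ : MeasurePreserving τ μ μ) (hgm : Measurable g)
    (hg : Integrable g μ) (N : ℕ) :
    0 ≤ ∫ ω in {ω | 0 < bM τ g N ω}, g ω ∂μ := by
  set E := {ω | 0 < bM τ g N ω} with hE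
  have hEmeas : MeasurableSet E := measurableSet_lt measurable_const (bM_measurable hτ.measurable hgm N)
  -- pointwise inequality : bM N ω - bM N (τ ω) ≤ indicator E g ω
  have key : ∀ ω, bM τ g N ω - bM τ g N (τ ω) ≤ E.indicator g ω := by
    intro ω
    by_cases hω : ω ∈ E
    · rw [Set.indicator_of_mem hω]
      obtain ⟨n, hn, hEq⟩ := bM_exists (τ := τ) (g := g) N ω
      have hn0 : n ≠ 0 := by
        rintro rfl
        simp only [hE, Set.mem_setOf_eq] at hω
        rw [hEq] at hω
        simp [bS] at hω
      obtain ⟨m, rfl⟩ := Nat.exists_eq_succ_of_ne_zero hn0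
      have : bS τ g (m + 1) ω = g ω + bS τ g m (τ ω) := bS_succ m ω
      rw [hEq, this]
      have : bS τ g m (τ ω) ≤ bM τ g N (τ ω) := bS_le_bM (le_trans (Nat.le_succ m) hn) (τ ω)
      linarith
    · rw [Set.indicator_of_notMem hω]
      have h1 : bM τ g N ω ≤ 0 := not_lt.mp (by simpa [hE] using hω)
      have h2 : bM τ g N ω = 0 := le_antisymm h1 (bM_nonneg N ω)
      have := bM_nonneg (τ := τ) (g := g) N (τ ω)
      linarith
  have hMint : Integrable (bM τ g N) μ := bM_integrable hτ hg N
  have hMτint : Integrable (fun ω => bM τ g N (τ ω)) μ :=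
    (hτ.integrable_comp hMint.aestronglyMeasurable).2 hMint
  have hInd : Integrable (E.indicator g) μ := hg.indicator hEmeas
  have hint : ∫ ω, (bM τ g N ω - bM τ g N (τ ω)) ∂μ ≤ ∫ ω, E.indicator g ω ∂μ :=
    integral_mono (hMint.sub hMτint) hInd key
  have hcomp : ∫ ω, bM τ g N (τ ω) ∂μ = ∫ ω, bM τ g N ω ∂μ := by
    conv_rhs => rw [← hτ.map_eq]
    exact (integral_map hτ.measurable.aemeasurable
      ((bM_measurable hτ.measurable hgm N).aestronglyMeasurable)).symm
  rw [integral_sub hMint hMτint, hcomp, sub_self, integral_indicator hEmeas] at hint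
  exact hint

/-- Integral of `g` over the set where some Birkhoff sum is positive is nonnegative. -/
lemma maximal_ergodic_iUnion (hτ : MeasurePreserving τ μ μ) (hgm : Measurable g)
    (hg : Integrable g μ) :
    0 ≤ ∫ ω in {ω | ∃ n, 0 < bS τ g n ω}, g ω ∂μ := by
  have hset : {ω | ∃ n, 0 < bS τ g n ω} = ⋃ N, {ω | 0 < bM τ g N ω} := by
    ext ω
    simp only [Set.mem_setOf_eq, Set.mem_iUnion]
    constructor
    · rintro ⟨n, hn⟩
      exact ⟨n, lt_of_lt_of_le hn (bS_le_bM le_rfl ω)⟩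
    · rintro ⟨N, hN⟩
      obtain ⟨n, _, hEq⟩ := bM_exists (τ := τ) (g := g) N ω
      exact ⟨n, hEq ▸ hN⟩
  rw [hset]
  have hmeas : ∀ N : ℕ, MeasurableSet {ω | 0 < bM τ g N ω} := fun N =>
    measurableSet_lt measurable_const (bM_measurable hτ.measurable hgm N)
  have hmono : Monotone fun N => {ω | 0 < bM τ g N ω} := by
    intro N N' h ω hω
    exact lt_of_lt_of_le hω (bM_mono h ω)
  have := tendsto_setIntegral_of_monotone hmeas hmono (hg.integrableOn)
  exact ge_of_tendsto' this fun N => maximal_ergodic hτ hgm hg N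


/-- Birkhoff averages. -/
def bA (τ : Ω → Ω) (g : Ω → ℝ) (n : ℕ) (ω : Ω) : ℝ := (n : ℝ)⁻¹ * bS τ g n ω

/-- Comparison lemma for `limsup`s in `EReal`. -/
lemma limsup_le_limsup_of_H {u v : ℕ → ℝ}
    (H : ∀ c c' : ℝ, c < c' → (∀ᶠ n in atTop, v n ≤ c) → ∀ᶠ n in atTop, u n ≤ c') :
    limsup (fun n => ((u n : ℝ) : EReal)) atTop ≤ limsup (fun n => ((v n : ℝ) : EReal)) atTop := by
  by_contra hlt
  push_neg at hlt
  obtain ⟨r, hr1, hr2⟩ := EReal.exists_between_coe_real hlt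
  obtain ⟨r', hr1', hr2'⟩ := EReal.exists_between_coe_real hr2
  have hv : ∀ᶠ n in atTop, v n ≤ r := by
    filter_upwards [eventually_lt_of_limsup_lt hr1] with n hn
    exact (EReal.coe_lt_coe_iff.mp hn).le
  have hu : ∀ᶠ n in atTop, u n ≤ r' := H r r' (EReal.coe_lt_coe_iff.mp hr1') hv
  have : limsup (fun n => ((u n : ℝ) : EReal)) atTop ≤ (r' : EReal) :=
    limsup_le_of_le (by isBoundedDefault) (hu.mono fun n h => EReal.coe_le_coe_iff.mpr h)
  exact absurd (lt_of_lt_of_le hr2' this) (lt_irrefl _)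

/-- Key step: the Birkhoff averages at `τ ω` are eventually dominated in terms of those at `ω`. -/
lemma H_forward (ω : Ω) : ∀ c c' : ℝ, c < c' →
    (∀ᶠ n in atTop, bA τ g n ω ≤ c) → ∀ᶠ n in atTop, bA τ g n (τ ω) ≤ c' := by
  intro c c' hcc hev
  rw [eventually_atTop] at hev ⊢
  obtain ⟨N₀, hN₀⟩ := hev
  refine ⟨max (N₀ + 1) (⌈(|c| + |g ω|) / (c' - c)⌉₊ + 1), fun n hn => ?_⟩
  have hn1 : N₀ + 1 ≤ n := le_trans (le_max_left _ _) hn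
  have hn2 : (⌈(|c| + |g ω|) / (c' - c)⌉₊ : ℝ) + 1 ≤ (n : ℝ) := by
    exact_mod_cast le_trans (le_max_right _ _) hn
  have hnpos : (0 : ℝ) < n := by exact_mod_cast (by omega : 0 < n)
  have hceil : (|c| + |g ω|) / (c' - c) ≤ (⌈(|c| + |g ω|) / (c' - c)⌉₊ : ℝ) := Nat.le_ceil _
  have hsub : 0 < c' - c := sub_pos.mpr hcc
  have hnc : |c| + |g ω| ≤ (n : ℝ) * (c' - c) := by
    rw [div_le_iff₀ hsub] at hceil
    nlinarith
  have hb : bS τ g (n + 1) ω ≤ ((n : ℝ) + 1) * c := by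
    have h1 := hN₀ (n + 1) (by omega)
    unfold bA at h1
    have hpos : (0 : ℝ) < ((n + 1 : ℕ) : ℝ) := by positivity
    rw [inv_mul_le_iff₀ hpos] at h1
    push_cast at h1
    linarith
  have hEq : bS τ g n (τ ω) = bS τ g (n + 1) ω - g ω := by
    rw [bS_succ]; ring
  unfold bA
  rw [inv_mul_le_iff₀ hnpos, hEq]
  have h2 : -g ω ≤ |g ω| := neg_le_abs _
  have h3 : c ≤ |c| := le_abs_self c
  nlinarith
/-- Reverse direction. -/
lemma H_backward (ω : Ω) : ∀ c c' : ℝ, c < c' →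
    (∀ᶠ n in atTop, bA τ g n (τ ω) ≤ c) → ∀ᶠ n in atTop, bA τ g n ω ≤ c' := by
  intro c c' hcc hev
  rw [eventually_atTop] at hev ⊢
  obtain ⟨N₀, hN₀⟩ := hev
  refine ⟨max (N₀ + 1) (⌈(|c| + |g ω|) / (c' - c)⌉₊ + 1), fun n hn => ?_⟩
  obtain ⟨m, rfl⟩ : ∃ m, n = m + 1 := by
    refine ⟨n - 1, ?_⟩
    have : 1 ≤ n := le_trans (by omega) (le_trans (le_max_left _ _) hn)
    omega
  have hm0 : N₀ ≤ m := by have := le_trans (le_max_left _ _) hn; omega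
  have hn2 : (⌈(|c| + |g ω|) / (c' - c)⌉₊ : ℝ) + 1 ≤ ((m : ℝ) + 1) := by
    exact_mod_cast le_trans (le_max_right _ _) hn
  have hsub : 0 < c' - c := sub_pos.mpr hcc
  have hceil : (|c| + |g ω|) / (c' - c) ≤ (⌈(|c| + |g ω|) / (c' - c)⌉₊ : ℝ) := Nat.le_ceil _
  have hnc : |c| + |g ω| ≤ ((m : ℝ) + 1) * (c' - c) := by
    rw [div_le_iff₀ hsub] at hceil
    nlinarith
  have hb : bS τ g m (τ ω) ≤ (m : ℝ) * c := by
    rcases Nat.eq_zero_or_pos m with rfl | hmpos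
    · simp [bS]
    · have h1 := hN₀ m hm0
      unfold bA at h1
      have hpos : (0 : ℝ) < (m : ℝ) := by exact_mod_cast hmpos
      rw [inv_mul_le_iff₀ hpos] at h1
      linarith
  have hpos : (0 : ℝ) < ((m + 1 : ℕ) : ℝ) := by positivity
  unfold bA
  rw [inv_mul_le_iff₀ hpos, bS_succ]
  have h2 : g ω ≤ |g ω| := le_abs_self _
  have h3 : -c ≤ |c| := neg_le_abs c
  push_cast
  nlinarith

/-- The `EReal`-valued limsup of Birkhoff averages is invariant. -/
lemma limsup_bA_comp (τ : Ω → Ω) (g : Ω → ℝ) (ω : Ω) :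
    limsup (fun n => ((bA τ g n (τ ω) : ℝ) : EReal)) atTop
      = limsup (fun n => ((bA τ g n ω : ℝ) : EReal)) atTop := by
  refine le_antisymm (limsup_le_limsup_of_H ?_) (limsup_le_limsup_of_H ?_)
  · exact fun c c' h h' => H_forward ω c c' h h'
  · exact fun c c' h h' => H_backward ω c c' h h'


lemma bS_sub_const (r : ℝ) (n : ℕ) (ω : Ω) :
    bS τ (fun ω => g ω - r) n ω = bS τ g n ω - n * r := by
  simp [bS, Finset.sum_sub_distrib, mul_comm]

lemma bS_neg (n : ℕ) (ω : Ω) : bS τ (fun ω => -g ω) n ω = -bS τ g n ω := by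
  simp [bS]

lemma bA_measurable (hτ : Measurable τ) (hgm : Measurable g) (n : ℕ) :
    Measurable (bA τ g n) := (bS_measurable hτ hgm n).const_mul _

/-- The invariant `EReal`-valued limsup function. -/
def Phi (τ : Ω → Ω) (g : Ω → ℝ) (ω : Ω) : EReal :=
  limsup (fun n => ((bA τ g n ω : ℝ) : EReal)) atTop

lemma Phi_measurable (hτ : Measurable τ) (hgm : Measurable g) : Measurable (Phi τ g) :=
  Measurable.limsup fun n => measurable_coe_real_ereal.comp (bA_measurable hτ hgm n)

lemma Phi_comp (τ : Ω → Ω) (g : Ω → ℝ) (ω : Ω) : Phi τ g (τ ω) = Phi τ g ω :=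
  limsup_bA_comp τ g ω

/-- One-sided Birkhoff: a.e. `limsup Aₙ g ≤ ∫ g`. -/
lemma birkhoff_limsup_le (hτ : Ergodic τ μ) (hgm : Measurable g) (hg : Integrable g μ) :
    ∀ᵐ ω ∂μ, Phi τ g ω ≤ ((∫ ω, g ω ∂μ : ℝ) : EReal) := by
  have key : ∀ ε : ℝ, 0 < ε →
      ∀ᵐ ω ∂μ, Phi τ g ω ≤ (((∫ ω, g ω ∂μ) + ε : ℝ) : EReal) := by
    intro ε hε
    set r : ℝ := (∫ ω, g ω ∂μ) + ε with hr
    set D : Set Ω := {ω | (r : EReal) < Phi τ g ω} with hD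
    have hDmeas : MeasurableSet D :=
      measurableSet_lt measurable_const (Phi_measurable hτ.measurable hgm)
    have hDinv : τ ⁻¹' D = D := by
      ext ω
      simp only [hD, Set.mem_preimage, Set.mem_setOf_eq, Phi_comp]
    rcases hτ.toPreErgodic.ae_empty_or_univ hDmeas hDinv with hempty | huniv
    · -- μ D = 0 : done
      have : ∀ᵐ ω ∂μ, ω ∉ D := by
        have h0 : μ D = 0 := by
          have := MeasureTheory.ae_eq_empty.mp hempty
          exact this
        exact measure_eq_zero_iff_ae_notMem.mp h0
      filter_upwards [this] with ω hω
      exact not_lt.mp hω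
    · -- μ D = 1 : contradiction with the maximal ergodic theorem
      exfalso
      set h : Ω → ℝ := fun ω => g ω - r with hh
      have hhm : Measurable h := hgm.sub measurable_const
      have hhi : Integrable h μ := hg.sub (integrable_const r)
      have hsub : D ⊆ {ω | ∃ n, 0 < bS τ h n ω} := by
        intro ω hω
        by_contra hcon
        simp only [Set.mem_setOf_eq, not_exists, not_lt] at hcon
        have hev : ∀ᶠ n in atTop, ((bA τ g n ω : ℝ) : EReal) ≤ (r : EReal) := by
          rw [eventually_atTop]
          refine ⟨1, fun n hn => ?_⟩
          have h1 : bS τ h n ω = bS τ g n ω - n * r := bS_sub_const r n ω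
          have h2 : bS τ g n ω ≤ n * r := by have := hcon n; rw [h1] at this; linarith
          have hnpos : (0 : ℝ) < n := by exact_mod_cast (by omega : 0 < n)
          rw [EReal.coe_le_coe_iff]
          unfold bA
          rw [inv_mul_le_iff₀ hnpos]
          linarith
        have : Phi τ g ω ≤ (r : EReal) := limsup_le_of_le (by isBoundedDefault) hev
        exact absurd (lt_of_lt_of_le hω this) (lt_irrefl _)
      have hEuniv : μ.restrict {ω | ∃ n, 0 < bS τ h n ω} = μ := by
        have h1 : D =ᵐ[μ] (Set.univ : Set Ω) := huniv
        have h2 : {ω | ∃ n, 0 < bS τ h n ω} =ᵐ[μ] (Set.univ : Set Ω) := by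
          have hc : μ Dᶜ = 0 := MeasureTheory.ae_eq_univ.mp h1
          rw [MeasureTheory.ae_eq_univ]
          exact measure_mono_null (Set.compl_subset_compl.mpr hsub) hc
        rw [Measure.restrict_congr_set h2, Measure.restrict_univ]
      have hmax := maximal_ergodic_iUnion hτ.toMeasurePreserving hhm hhi
      rw [hEuniv] at hmax
      have hint : ∫ ω, h ω ∂μ = -ε := by
        rw [hh]
        rw [integral_sub hg (integrable_const r), integral_const]
        simp [hr]
      rw [hint] at hmax
      linarith
  have haeall : ∀ᵐ ω ∂μ, ∀ k : ℕ, Phi τ g ω ≤ (((∫ ω, g ω ∂μ) + ((k : ℝ) + 1)⁻¹ : ℝ) : EReal) := by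
    rw [ae_all_iff]
    intro k
    exact key ((k : ℝ) + 1)⁻¹ (by positivity)
  filter_upwards [haeall] with ω hω
  have hT : Tendsto (fun k : ℕ => (((∫ ω, g ω ∂μ) + ((k : ℝ) + 1)⁻¹ : ℝ) : EReal)) atTop
      (nhds ((∫ ω, g ω ∂μ : ℝ) : EReal)) := by
    rw [EReal.tendsto_coe]
    have : Tendsto (fun k : ℕ => ((k : ℝ) + 1)⁻¹) atTop (nhds 0) := by
      simpa [one_div] using tendsto_one_div_add_atTop_nhds_zero_nat (𝕜 := ℝ)
    simpa using tendsto_const_nhds.add this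
  exact ge_of_tendsto' hT hω

/-- Birkhoff pointwise ergodic theorem for a measurable integrable function. -/
lemma birkhoff_ae_meas (hτ : Ergodic τ μ) (hgm : Measurable g) (hg : Integrable g μ) :
    ∀ᵐ ω ∂μ, Tendsto (fun n => bA τ g n ω) atTop (nhds (∫ ω, g ω ∂μ)) := by
  have hup := birkhoff_limsup_le hτ hgm hg
  have hlow := birkhoff_limsup_le (g := fun ω => -g ω) hτ (hgm.neg) (hg.neg)
  filter_upwards [hup, hlow] with ω h1 h2
  have hAneg : ∀ n, bA τ (fun ω => -g ω) n ω = -bA τ g n ω := by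
    intro n; unfold bA; rw [bS_neg]; ring
  have h2' : limsup (fun n => (((-(bA τ g n ω)) : ℝ) : EReal)) atTop
      ≤ ((-(∫ ω, g ω ∂μ) : ℝ) : EReal) := by
    have : (fun n => ((bA τ (fun ω => -g ω) n ω : ℝ) : EReal))
        = fun n => (((-(bA τ g n ω)) : ℝ) : EReal) := by
      funext n; rw [hAneg]
    rw [Phi, this] at h2
    have hint : ∫ ω, -g ω ∂μ = -(∫ ω, g ω ∂μ) := integral_neg g
    rw [hint] at h2
    exact h2
  have hliminf : ((∫ ω, g ω ∂μ : ℝ) : EReal)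
      ≤ liminf (fun n => ((bA τ g n ω : ℝ) : EReal)) atTop := by
    have hcoe : (fun n => (((-(bA τ g n ω)) : ℝ) : EReal))
        = -(fun n => ((bA τ g n ω : ℝ) : EReal)) := by
      funext n; simp [EReal.coe_neg]
    rw [hcoe, EReal.limsup_neg, EReal.coe_neg] at h2'
    exact EReal.neg_le_neg_iff.mp h2'
  have hls : limsup (fun n => ((bA τ g n ω : ℝ) : EReal)) atTop = ((∫ ω, g ω ∂μ : ℝ) : EReal) :=
    le_antisymm h1 (le_trans hliminf (liminf_le_limsup))
  have hli : liminf (fun n => ((bA τ g n ω : ℝ) : EReal)) atTop = ((∫ ω, g ω ∂μ : ℝ) : EReal) :=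
    le_antisymm (le_trans liminf_le_limsup h1) hliminf
  have : Tendsto (fun n => ((bA τ g n ω : ℝ) : EReal)) atTop
      (nhds ((∫ ω, g ω ∂μ : ℝ) : EReal)) := tendsto_of_liminf_eq_limsup hli hls
  exact EReal.tendsto_coe.mp this

/-- Birkhoff pointwise ergodic theorem. -/
theorem birkhoff_ae (hτ : Ergodic τ μ) (hg : Integrable g μ) :
    ∀ᵐ ω ∂μ, Tendsto (fun n => bA τ g n ω) atTop (nhds (∫ ω, g ω ∂μ)) := by
  set g' := hg.1.mk g with hg'
  have hg'm : Measurable g' := hg.1.stronglyMeasurable_mk.measurable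
  have hae : g =ᵐ[μ] g' := hg.1.ae_eq_mk
  have hg'i : Integrable g' μ := hg.congr hae
  have hmain := birkhoff_ae_meas hτ hg'm hg'i
  have hint : ∫ ω, g ω ∂μ = ∫ ω, g' ω ∂μ := integral_congr_ae hae
  have haeS : ∀ᵐ ω ∂μ, ∀ k : ℕ, g (τ^[k] ω) = g' (τ^[k] ω) := by
    rw [ae_all_iff]
    intro k
    exact (hτ.toMeasurePreserving.iterate k).quasiMeasurePreserving.ae_eq_comp hae
  filter_upwards [hmain, haeS] with ω h1 h2
  rw [hint]
  refine h1.congr fun n => ?_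
  unfold bA bS
  congr 1
  exact Finset.sum_congr rfl fun k _ => (h2 k).symm

end BirkhoffAux

section StmtAux

lemma half_half : (1 : ENNReal) / 1 = 1 / 2 + 1 / 2 := by
  rw [ENNReal.div_add_div_same]
  norm_num
  exact (ENNReal.div_self two_ne_zero ENNReal.ofNat_ne_top).symm

/-- The elementary random variables appearing linearly in `wvec` at base time `k₁ + k₂`. -/
def Yfn (Z : Ω → EuclideanSpace ℝ (Fin m)) (τ : Ω → Ω) (i : Fin (k₂ + 2))
    (o : Option (Fin (k₁ + 1) × Fin m)) (ω : Ω) : ℝ :=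
  Option.elim o (if i.1 = 0 then (1 : ℝ) else 0)
    fun p => if i.1 = 0 then (0 : ℝ) else Z (τ^[k₁ + k₂ - (i.1 - 1) - p.1.1] ω) p.2

/-- Coefficient vector. -/
def avn (a : EuclideanSpace ℝ (Fin (k₁ + 1) × Fin m))
    (o : Option (Fin (k₁ + 1) × Fin m)) : ℝ := Option.elim o 1 fun p => a p

lemma wvec_shift (Z : Ω → EuclideanSpace ℝ (Fin m)) (τ : Ω → Ω)
    (a : EuclideanSpace ℝ (Fin (k₁ + 1) × Fin m)) (i : Fin (k₂ + 2)) {t : ℕ}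
    (ht : k₁ + k₂ ≤ t) (ω : Ω) :
    wvec m k₁ k₂ Z τ a t i ω = wvec m k₁ k₂ Z τ a (k₁ + k₂) i (τ^[t - (k₁ + k₂)] ω) := by
  unfold wvec
  by_cases hi : i.1 = 0
  · simp [hi]
  · simp only [hi, if_false]
    unfold comp zproc
    refine Finset.sum_congr rfl fun h _ => Finset.sum_congr rfl fun j _ => ?_
    have h1 : h.1 < k₁ + 1 := h.isLt
    have h2 : i.1 < k₂ + 2 := i.isLt
    rw [← Function.iterate_add_apply]
    rw [show t - (i.1 - 1) - h.1 = k₁ + k₂ - (i.1 - 1) - h.1 + (t - (k₁ + k₂)) by omega]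

lemma wvec_expand (Z : Ω → EuclideanSpace ℝ (Fin m)) (τ : Ω → Ω)
    (a : EuclideanSpace ℝ (Fin (k₁ + 1) × Fin m)) (i : Fin (k₂ + 2)) (ω : Ω) :
    wvec m k₁ k₂ Z τ a (k₁ + k₂) i ω
      = ∑ o : Option (Fin (k₁ + 1) × Fin m), avn m k₁ a o * Yfn m k₁ k₂ Z τ i o ω := by
  rw [Fintype.sum_option]
  by_cases hi : i.1 = 0
  · simp [wvec, avn, Yfn, hi]
  · simp only [avn, Yfn, Option.elim, hi, if_false, mul_zero, one_mul, zero_add, wvec]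
    unfold comp zproc
    rw [Fintype.sum_prod_type]

variable {μ : Measure Ω} [IsProbabilityMeasure μ]

lemma memℒp_Yfn {Z : Ω → EuclideanSpace ℝ (Fin m)} {τ : Ω → Ω}
    (hZ : MemLp Z 2 μ) (hτ : MeasurePreserving τ μ μ)
    (i : Fin (k₂ + 2)) (o : Option (Fin (k₁ + 1) × Fin m)) :
    MemLp (Yfn m k₁ k₂ Z τ i o) 2 μ := by
  cases o with
  | none => exact memLp_const _
  | some p =>
    by_cases hi : i.1 = 0
    · have heq : Yfn m k₁ k₂ Z τ i (some p) = fun _ => (0 : ℝ) := by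
        funext ω; simp [Yfn, hi]
      rw [heq]; exact memLp_const _
    · have h1 : MemLp (fun ω => Z ω p.2) 2 μ := (EuclideanSpace.proj (𝕜 := ℝ) p.2).comp_memLp' hZ
      have h2 : MemLp ((fun ω => Z ω p.2) ∘ (τ^[k₁ + k₂ - (i.1 - 1) - p.1.1])) 2 μ :=
        h1.comp_measurePreserving (hτ.iterate _)
      have heq : Yfn m k₁ k₂ Z τ i (some p)
          = (fun ω => Z ω p.2) ∘ (τ^[k₁ + k₂ - (i.1 - 1) - p.1.1]) := by
        funext ω; simp [Yfn, hi, Function.comp]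
      rw [heq]; exact h2

lemma integrable_Yfn_mul {Z : Ω → EuclideanSpace ℝ (Fin m)} {τ : Ω → Ω}
    (hZ : MemLp Z 2 μ) (hτ : MeasurePreserving τ μ μ)
    (i i' : Fin (k₂ + 2)) (o o' : Option (Fin (k₁ + 1) × Fin m)) :
    Integrable (fun ω => Yfn m k₁ k₂ Z τ i o ω * Yfn m k₁ k₂ Z τ i' o' ω) μ := by
  have h1 := memℒp_Yfn m k₁ k₂ (μ := μ) hZ hτ i o
  have h2 := memℒp_Yfn m k₁ k₂ (μ := μ) hZ hτ i' o'
  have h3 : MemLp (Yfn m k₁ k₂ Z τ i o • Yfn m k₁ k₂ Z τ i' o') 1 μ :=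
    h2.smul h1
  exact memLp_one_iff_integrable.mp h3

lemma integrable_wvec_mul {Z : Ω → EuclideanSpace ℝ (Fin m)} {τ : Ω → Ω}
    (hZ : MemLp Z 2 μ) (hτ : MeasurePreserving τ μ μ)
    (a : EuclideanSpace ℝ (Fin (k₁ + 1) × Fin m)) (i i' : Fin (k₂ + 2)) :
    Integrable (fun ω =>
      wvec m k₁ k₂ Z τ a (k₁ + k₂) i ω * wvec m k₁ k₂ Z τ a (k₁ + k₂) i' ω) μ := by
  have hw : ∀ (i : Fin (k₂ + 2)), MemLp (fun ω => wvec m k₁ k₂ Z τ a (k₁ + k₂) i ω) 2 μ := by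
    intro i
    have : (fun ω => wvec m k₁ k₂ Z τ a (k₁ + k₂) i ω)
        = fun ω => ∑ o : Option (Fin (k₁ + 1) × Fin m),
            avn m k₁ a o * Yfn m k₁ k₂ Z τ i o ω :=
      funext fun ω => wvec_expand m k₁ k₂ Z τ a i ω
    rw [this]
    exact memLp_finsetSum _ fun o _ => (memℒp_Yfn m k₁ k₂ hZ hτ i o).const_mul _
  have h3 : MemLp ((fun ω => wvec m k₁ k₂ Z τ a (k₁ + k₂) i ω)
      • (fun ω => wvec m k₁ k₂ Z τ a (k₁ + k₂) i' ω)) 1 μ :=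
    (hw i').smul (hw i)
  exact memLp_one_iff_integrable.mp h3

/-- Sample averaged products. -/
def Ghat (Z : Ω → EuclideanSpace ℝ (Fin m)) (τ : Ω → Ω) (T : ℕ) (i : Fin (k₂ + 2))
    (o : Option (Fin (k₁ + 1) × Fin m)) (i' : Fin (k₂ + 2))
    (o' : Option (Fin (k₁ + 1) × Fin m)) (ω : Ω) : ℝ :=
  ((T : ℝ) - (k₁ + k₂))⁻¹ * ∑ t ∈ Finset.Ioc (k₁ + k₂) T,
    Yfn m k₁ k₂ Z τ i o (τ^[t - (k₁ + k₂)] ω) * Yfn m k₁ k₂ Z τ i' o' (τ^[t - (k₁ + k₂)] ω)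

/-- Population products. -/
def Gmat (μ : Measure Ω) (Z : Ω → EuclideanSpace ℝ (Fin m)) (τ : Ω → Ω) (i : Fin (k₂ + 2))
    (o : Option (Fin (k₁ + 1) × Fin m)) (i' : Fin (k₂ + 2))
    (o' : Option (Fin (k₁ + 1) × Fin m)) : ℝ :=
  ∫ ω, Yfn m k₁ k₂ Z τ i o ω * Yfn m k₁ k₂ Z τ i' o' ω ∂μ

lemma Ssamp_entry (Z : Ω → EuclideanSpace ℝ (Fin m)) (τ : Ω → Ω) (T : ℕ)
    (a : EuclideanSpace ℝ (Fin (k₁ + 1) × Fin m)) (ω : Ω) (i i' : Fin (k₂ + 2)) :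
    Ssamp m k₁ k₂ Z τ T a ω i i'
      = ∑ o : Option (Fin (k₁ + 1) × Fin m), ∑ o' : Option (Fin (k₁ + 1) × Fin m),
          avn m k₁ a o * avn m k₁ a o' * Ghat m k₁ k₂ Z τ T i o i' o' ω := by
  unfold Ssamp Ghat
  have hterm : ∀ t ∈ Finset.Ioc (k₁ + k₂) T,
      wvec m k₁ k₂ Z τ a t i ω * wvec m k₁ k₂ Z τ a t i' ω
        = ∑ o : Option (Fin (k₁ + 1) × Fin m), ∑ o' : Option (Fin (k₁ + 1) × Fin m),
            avn m k₁ a o * avn m k₁ a o' *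
              (Yfn m k₁ k₂ Z τ i o (τ^[t - (k₁ + k₂)] ω) *
                Yfn m k₁ k₂ Z τ i' o' (τ^[t - (k₁ + k₂)] ω)) := by
    intro t ht
    have htc : k₁ + k₂ ≤ t := le_of_lt (Finset.mem_Ioc.mp ht).1
    rw [wvec_shift m k₁ k₂ Z τ a i htc ω, wvec_shift m k₁ k₂ Z τ a i' htc ω,
      wvec_expand, wvec_expand, Finset.sum_mul_sum]
    exact Finset.sum_congr rfl fun o _ => Finset.sum_congr rfl fun o' _ => by ring
  rw [Finset.sum_congr rfl hterm, Finset.sum_comm, Finset.mul_sum]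
  refine Finset.sum_congr rfl fun o _ => ?_
  rw [Finset.sum_comm, Finset.mul_sum]
  refine Finset.sum_congr rfl fun o' _ => ?_
  simp only [Finset.mul_sum]
  exact Finset.sum_congr rfl fun t _ => by ring

lemma Smat_entry {Z : Ω → EuclideanSpace ℝ (Fin m)} {τ : Ω → Ω}
    (hZ : MemLp Z 2 μ) (hτ : MeasurePreserving τ μ μ)
    (a : EuclideanSpace ℝ (Fin (k₁ + 1) × Fin m)) (i i' : Fin (k₂ + 2)) :
    Smat m k₁ k₂ μ Z τ a i i'
      = ∑ o : Option (Fin (k₁ + 1) × Fin m), ∑ o' : Option (Fin (k₁ + 1) × Fin m),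
          avn m k₁ a o * avn m k₁ a o' * Gmat m k₁ k₂ μ Z τ i o i' o' := by
  unfold Smat Gmat
  have hterm : ∀ ω : Ω,
      wvec m k₁ k₂ Z τ a (k₁ + k₂) i ω * wvec m k₁ k₂ Z τ a (k₁ + k₂) i' ω
        = ∑ o : Option (Fin (k₁ + 1) × Fin m), ∑ o' : Option (Fin (k₁ + 1) × Fin m),
            avn m k₁ a o * avn m k₁ a o' *
              (Yfn m k₁ k₂ Z τ i o ω * Yfn m k₁ k₂ Z τ i' o' ω) := by
    intro ω
    rw [wvec_expand, wvec_expand, Finset.sum_mul_sum]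
    exact Finset.sum_congr rfl fun o _ => Finset.sum_congr rfl fun o' _ => by ring
  rw [integral_congr_ae (Eventually.of_forall hterm)]
  rw [integral_finset_sum _ fun o _ => integrable_finset_sum _ fun o' _ =>
    ((integrable_Yfn_mul m k₁ k₂ hZ hτ i i' o o').const_mul _)]
  refine Finset.sum_congr rfl fun o _ => ?_
  rw [integral_finset_sum _ fun o' _ => ((integrable_Yfn_mul m k₁ k₂ hZ hτ i i' o o').const_mul _)]
  exact Finset.sum_congr rfl fun o' _ => integral_const_mul _ _


lemma Ghat_tendsto {Z : Ω → EuclideanSpace ℝ (Fin m)} {τ : Ω → Ω}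
    (hτ : Ergodic τ μ) (hZ : MemLp Z 2 μ) :
    ∀ᵐ ω ∂μ, ∀ (i : Fin (k₂ + 2)) (o : Option (Fin (k₁ + 1) × Fin m))
        (i' : Fin (k₂ + 2)) (o' : Option (Fin (k₁ + 1) × Fin m)),
      Tendsto (fun T => Ghat m k₁ k₂ Z τ T i o i' o' ω) atTop
        (nhds (Gmat m k₁ k₂ μ Z τ i o i' o')) := by
  rw [ae_all_iff]; intro i
  rw [ae_all_iff]; intro o
  rw [ae_all_iff]; intro i'
  rw [ae_all_iff]; intro o'
  set q : Ω → ℝ := fun ω => Yfn m k₁ k₂ Z τ i o ω * Yfn m k₁ k₂ Z τ i' o' ω with hq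
  have hqi : Integrable q μ := integrable_Yfn_mul m k₁ k₂ hZ hτ.toMeasurePreserving i i' o o'
  set g : Ω → ℝ := fun ω => q (τ ω) with hg
  have hgi : Integrable g μ :=
    (hτ.toMeasurePreserving.integrable_comp hqi.aestronglyMeasurable).2 hqi
  have hint : ∫ ω, g ω ∂μ = ∫ ω, q ω ∂μ := by
    conv_rhs => rw [← hτ.toMeasurePreserving.map_eq]
    exact (integral_map hτ.toMeasurePreserving.measurable.aemeasurable
      (by rw [hτ.toMeasurePreserving.map_eq]; exact hqi.aestronglyMeasurable)).symm
  have hB := birkhoff_ae hτ hgi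
  filter_upwards [hB] with ω hω
  have hGm : Gmat m k₁ k₂ μ Z τ i o i' o' = ∫ ω, g ω ∂μ := by rw [hint]; rfl
  rw [hGm]
  have h1 : Tendsto (fun T : ℕ => bA τ g (T - (k₁ + k₂)) ω) atTop (nhds (∫ ω, g ω ∂μ)) :=
    hω.comp (tendsto_sub_atTop_nat (k₁ + k₂))
  refine h1.congr' ?_
  filter_upwards [eventually_ge_atTop (k₁ + k₂ + 1)] with T hT
  have hc : k₁ + k₂ ≤ T := by omega
  unfold bA bS Ghat
  have hcast : ((T : ℝ) - ((k₁ : ℝ) + (k₂ : ℝ))) = ((T - (k₁ + k₂) : ℕ) : ℝ) := by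
    rw [Nat.cast_sub hc]; push_cast; ring
  rw [← hcast]
  congr 1
  refine Finset.sum_nbij' (fun k => k + (k₁ + k₂ + 1)) (fun t => t - (k₁ + k₂ + 1))
    ?_ ?_ ?_ ?_ ?_
  · intro k hk
    simp only [Finset.mem_range] at hk
    simp only [Finset.mem_Ioc]
    omega
  · intro t ht
    simp only [Finset.mem_Ioc] at ht
    simp only [Finset.mem_range]
    omega
  · intro k _
    show k + (k₁ + k₂ + 1) - (k₁ + k₂ + 1) = k
    omega
  · intro t ht
    simp only [Finset.mem_Ioc] at ht
    show t - (k₁ + k₂ + 1) + (k₁ + k₂ + 1) = t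
    omega
  · intro k _
    have : k + (k₁ + k₂ + 1) - (k₁ + k₂) = k + 1 := by omega
    rw [this]
    show g (τ^[k] ω) = q (τ^[k + 1] ω)
    rw [hg]
    simp only
    rw [← Function.iterate_succ_apply' τ k ω]

lemma abs_apply_le_norm {n : Type*} [Fintype n] (x : EuclideanSpace ℝ n) (i : n) :
    |x i| ≤ ‖x‖ := by
  rw [EuclideanSpace.norm_eq]
  refine le_trans (le_of_eq (Real.sqrt_sq_eq_abs (x i)).symm) (Real.sqrt_le_sqrt ?_)
  have h : (x i) ^ 2 = ‖x i‖ ^ 2 := by simp [Real.norm_eq_abs, sq_abs]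
  rw [h]
  exact Finset.single_le_sum (f := fun j => ‖x j‖ ^ 2) (fun j _ => by positivity)
    (Finset.mem_univ i)

lemma avn_le_one {a : EuclideanSpace ℝ (Fin (k₁ + 1) × Fin m)} (ha : ‖a‖ = 1)
    (o : Option (Fin (k₁ + 1) × Fin m)) : |avn m k₁ a o| ≤ 1 := by
  cases o with
  | none => simp [avn]
  | some p => exact le_trans (by exact abs_apply_le_norm a p) (le_of_eq ha)

lemma Qp_eq {Z : Ω → EuclideanSpace ℝ (Fin m)} {τ : Ω → Ω}
    (hZ : MemLp Z 2 μ) (hτ : MeasurePreserving τ μ μ)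
    (a : EuclideanSpace ℝ (Fin (k₁ + 1) × Fin m)) (x : EuclideanSpace ℝ (Fin (k₂ + 2))) :
    (∑ i, ∑ j, x i * Smat m k₁ k₂ μ Z τ a i j * x j)
      = ∫ ω, (∑ i, x i * wvec m k₁ k₂ Z τ a (k₁ + k₂) i ω) ^ 2 ∂μ := by
  symm
  have hterm : ∀ ω : Ω, (∑ i, x i * wvec m k₁ k₂ Z τ a (k₁ + k₂) i ω) ^ 2
      = ∑ i, ∑ j, (x i * x j) *
        (wvec m k₁ k₂ Z τ a (k₁ + k₂) i ω * wvec m k₁ k₂ Z τ a (k₁ + k₂) j ω) := by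
    intro ω
    rw [sq, Finset.sum_mul_sum]
    exact Finset.sum_congr rfl fun i _ => Finset.sum_congr rfl fun j _ => by ring
  rw [integral_congr_ae (Eventually.of_forall hterm)]
  rw [integral_finset_sum _ fun i _ => integrable_finset_sum _ fun j _ =>
    ((integrable_wvec_mul m k₁ k₂ hZ hτ a i j).const_mul _)]
  refine Finset.sum_congr rfl fun i _ => ?_
  rw [integral_finset_sum _ fun j _ => ((integrable_wvec_mul m k₁ k₂ hZ hτ a i j).const_mul _)]
  refine Finset.sum_congr rfl fun j _ => ?_
  rw [integral_const_mul]
  show (x i * x j) * Smat m k₁ k₂ μ Z τ a i j = _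
  ring

lemma Qp_nonneg {Z : Ω → EuclideanSpace ℝ (Fin m)} {τ : Ω → Ω}
    (hZ : MemLp Z 2 μ) (hτ : MeasurePreserving τ μ μ)
    (a : EuclideanSpace ℝ (Fin (k₁ + 1) × Fin m)) (x : EuclideanSpace ℝ (Fin (k₂ + 2))) :
    0 ≤ ∑ i, ∑ j, x i * Smat m k₁ k₂ μ Z τ a i j * x j := by
  rw [Qp_eq m k₁ k₂ hZ hτ a x]
  exact integral_nonneg fun ω => sq_nonneg _

/-- The uniform (in `a`, `x`) error bound. -/
def Dsum (μ : Measure Ω) (Z : Ω → EuclideanSpace ℝ (Fin m)) (τ : Ω → Ω) (T : ℕ) (ω : Ω) : ℝ :=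
  ∑ i : Fin (k₂ + 2), ∑ j : Fin (k₂ + 2), ∑ o : Option (Fin (k₁ + 1) × Fin m),
    ∑ o' : Option (Fin (k₁ + 1) × Fin m),
    |Ghat m k₁ k₂ Z τ T i o j o' ω - Gmat m k₁ k₂ μ Z τ i o j o'|

lemma Dsum_nonneg (Z : Ω → EuclideanSpace ℝ (Fin m)) (τ : Ω → Ω) (T : ℕ) (ω : Ω) :
    0 ≤ Dsum m k₁ k₂ μ Z τ T ω :=
  Finset.sum_nonneg fun i _ => Finset.sum_nonneg fun j _ =>
    Finset.sum_nonneg fun o _ => Finset.sum_nonneg fun o' _ => abs_nonneg _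

lemma Q_diff_bound {Z : Ω → EuclideanSpace ℝ (Fin m)} {τ : Ω → Ω}
    (hZ : MemLp Z 2 μ) (hτ : MeasurePreserving τ μ μ)
    {a : EuclideanSpace ℝ (Fin (k₁ + 1) × Fin m)} (ha : ‖a‖ = 1)
    {x : EuclideanSpace ℝ (Fin (k₂ + 2))} (hx : ‖x‖ = 1) (T : ℕ) (ω : Ω) :
    |(∑ i, ∑ j, x i * Ssamp m k₁ k₂ Z τ T a ω i j * x j)
        - (∑ i, ∑ j, x i * Smat m k₁ k₂ μ Z τ a i j * x j)|
      ≤ Dsum m k₁ k₂ μ Z τ T ω := by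
  unfold Dsum
  have hentry : ∀ i j, Ssamp m k₁ k₂ Z τ T a ω i j - Smat m k₁ k₂ μ Z τ a i j
      = ∑ o : Option (Fin (k₁ + 1) × Fin m), ∑ o' : Option (Fin (k₁ + 1) × Fin m),
          avn m k₁ a o * avn m k₁ a o' *
            (Ghat m k₁ k₂ Z τ T i o j o' ω - Gmat m k₁ k₂ μ Z τ i o j o') := by
    intro i j
    rw [Ssamp_entry m k₁ k₂ Z τ T a ω i j, Smat_entry m k₁ k₂ hZ hτ a i j,
      ← Finset.sum_sub_distrib]
    refine Finset.sum_congr rfl fun o _ => ?_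
    rw [← Finset.sum_sub_distrib]
    exact Finset.sum_congr rfl fun o' _ => by ring
  have hdiff : (∑ i, ∑ j, x i * Ssamp m k₁ k₂ Z τ T a ω i j * x j)
      - (∑ i, ∑ j, x i * Smat m k₁ k₂ μ Z τ a i j * x j)
      = ∑ i, ∑ j, x i * x j *
          (Ssamp m k₁ k₂ Z τ T a ω i j - Smat m k₁ k₂ μ Z τ a i j) := by
    rw [← Finset.sum_sub_distrib]
    refine Finset.sum_congr rfl fun i _ => ?_
    rw [← Finset.sum_sub_distrib]
    exact Finset.sum_congr rfl fun j _ => by ring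
  rw [hdiff]
  refine le_trans (Finset.abs_sum_le_sum_abs _ _) ?_
  refine Finset.sum_le_sum fun i _ => ?_
  refine le_trans (Finset.abs_sum_le_sum_abs _ _) ?_
  refine Finset.sum_le_sum fun j _ => ?_
  rw [hentry i j, abs_mul]
  have hxx : |x i * x j| ≤ 1 := by
    rw [abs_mul]
    have h1 := abs_apply_le_norm x i
    have h2 := abs_apply_le_norm x j
    rw [hx] at h1 h2
    have := mul_le_one₀ h1 (abs_nonneg _) h2
    simpa using this
  have h2 : |∑ o : Option (Fin (k₁ + 1) × Fin m), ∑ o' : Option (Fin (k₁ + 1) × Fin m),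
      avn m k₁ a o * avn m k₁ a o' *
        (Ghat m k₁ k₂ Z τ T i o j o' ω - Gmat m k₁ k₂ μ Z τ i o j o')|
      ≤ ∑ o : Option (Fin (k₁ + 1) × Fin m), ∑ o' : Option (Fin (k₁ + 1) × Fin m),
          |Ghat m k₁ k₂ Z τ T i o j o' ω - Gmat m k₁ k₂ μ Z τ i o j o'| := by
    refine le_trans (Finset.abs_sum_le_sum_abs _ _) (Finset.sum_le_sum fun o _ => ?_)
    refine le_trans (Finset.abs_sum_le_sum_abs _ _) (Finset.sum_le_sum fun o' _ => ?_)
    rw [abs_mul, abs_mul]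
    have h3 := avn_le_one m k₁ ha o
    have h4 := avn_le_one m k₁ ha o'
    have h5 : |avn m k₁ a o| * |avn m k₁ a o'| ≤ 1 := by
      have := mul_le_one₀ h3 (abs_nonneg _) h4
      simpa using this
    calc |avn m k₁ a o| * |avn m k₁ a o'| *
          |Ghat m k₁ k₂ Z τ T i o j o' ω - Gmat m k₁ k₂ μ Z τ i o j o'|
        ≤ 1 * |Ghat m k₁ k₂ Z τ T i o j o' ω - Gmat m k₁ k₂ μ Z τ i o j o'| :=
          mul_le_mul_of_nonneg_right h5 (abs_nonneg _)
      _ = _ := one_mul _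
  calc |x i * x j| * |∑ o : Option (Fin (k₁ + 1) × Fin m),
          ∑ o' : Option (Fin (k₁ + 1) × Fin m),
          avn m k₁ a o * avn m k₁ a o' *
            (Ghat m k₁ k₂ Z τ T i o j o' ω - Gmat m k₁ k₂ μ Z τ i o j o')|
      ≤ 1 * (∑ o : Option (Fin (k₁ + 1) × Fin m), ∑ o' : Option (Fin (k₁ + 1) × Fin m),
          |Ghat m k₁ k₂ Z τ T i o j o' ω - Gmat m k₁ k₂ μ Z τ i o j o'|) := by
        refine mul_le_mul hxx h2 (abs_nonneg _) zero_le_one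
    _ = _ := one_mul _

end StmtAux

variable (μ : Measure Ω) [IsProbabilityMeasure μ]

theorem stmt6 (τ : Ω → Ω) (hτ : Ergodic τ μ)
    (Z : Ω → EuclideanSpace ℝ (Fin m)) (hZ : MemLp Z 2 μ)
    (hmean : ∫ ω, Z ω ∂μ = 0) :
    ∀ᵐ ω ∂μ,
      (⨅ a : { a : EuclideanSpace ℝ (Fin (k₁ + 1) × Fin m) // ‖a‖ = 1 },
        lambdaMin (Smat m k₁ k₂ μ Z τ a.1)) ≤
      liminf (fun T => ⨅ a : { a : EuclideanSpace ℝ (Fin (k₁ + 1) × Fin m) // ‖a‖ = 1 },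
        lambdaMin (Ssamp m k₁ k₂ Z τ T a.1 ω)) atTop := by
  rcases isEmpty_or_nonempty {a : EuclideanSpace ℝ (Fin (k₁ + 1) × Fin m) // ‖a‖ = 1}
    with hE | hNE
  · refine Eventually.of_forall fun ω => ?_
    rw [Real.iInf_of_isEmpty]
    have h0 : (fun T : ℕ => ⨅ a : {a : EuclideanSpace ℝ (Fin (k₁ + 1) × Fin m) // ‖a‖ = 1},
        lambdaMin (Ssamp m k₁ k₂ Z τ T a.1 ω)) = fun _ => (0 : ℝ) :=
      funext fun T => Real.iInf_of_isEmpty _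
    rw [h0, liminf_const]
  · have hτmp := hτ.toMeasurePreserving
    filter_upwards [Ghat_tendsto m k₁ k₂ (μ := μ) hτ hZ] with ω hω
    haveI : Nonempty {x : EuclideanSpace ℝ (Fin (k₂ + 2)) // ‖x‖ = 1} :=
      ⟨⟨EuclideanSpace.single 0 1, by rw [EuclideanSpace.norm_single]; norm_num⟩⟩
    set L : ℝ := ⨅ a : {a : EuclideanSpace ℝ (Fin (k₁ + 1) × Fin m) // ‖a‖ = 1},
      lambdaMin (Smat m k₁ k₂ μ Z τ a.1) with hL
    have hΔ0 : Tendsto (fun T => Dsum m k₁ k₂ μ Z τ T ω) atTop (nhds 0) := by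
      have h : Tendsto (fun T => Dsum m k₁ k₂ μ Z τ T ω) atTop
          (nhds (∑ i : Fin (k₂ + 2), ∑ j : Fin (k₂ + 2),
            ∑ _o : Option (Fin (k₁ + 1) × Fin m),
            ∑ _o' : Option (Fin (k₁ + 1) × Fin m), (0 : ℝ))) := by
        unfold Dsum
        refine tendsto_finset_sum _ fun i _ => tendsto_finset_sum _ fun j _ => ?_
        refine tendsto_finset_sum _ fun o _ => tendsto_finset_sum _ fun o' _ => ?_
        have h2 : Tendsto (fun T => Ghat m k₁ k₂ Z τ T i o j o' ω
            - Gmat m k₁ k₂ μ Z τ i o j o') atTop (nhds 0) := by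
          have := (hω i o j o').sub (tendsto_const_nhds
            (x := Gmat m k₁ k₂ μ Z τ i o j o') (f := atTop))
          simpa using this
        simpa using h2.abs
      simpa using h
    have hlminSmat_nonneg : ∀ a : {a : EuclideanSpace ℝ (Fin (k₁ + 1) × Fin m) // ‖a‖ = 1},
        0 ≤ lambdaMin (Smat m k₁ k₂ μ Z τ a.1) := by
      intro a
      refine le_ciInf fun x => ?_
      exact Qp_nonneg m k₁ k₂ hZ hτmp a.1 x.1
    have hLle : ∀ a : {a : EuclideanSpace ℝ (Fin (k₁ + 1) × Fin m) // ‖a‖ = 1},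
        L ≤ lambdaMin (Smat m k₁ k₂ μ Z τ a.1) := by
      intro a
      rw [hL]
      refine ciInf_le ⟨0, ?_⟩ a
      rintro y ⟨b, rfl⟩
      exact hlminSmat_nonneg b
    have hper : ∀ (T : ℕ) (a : {a : EuclideanSpace ℝ (Fin (k₁ + 1) × Fin m) // ‖a‖ = 1}),
        L - Dsum m k₁ k₂ μ Z τ T ω ≤ lambdaMin (Ssamp m k₁ k₂ Z τ T a.1 ω) := by
      intro T a
      show L - Dsum m k₁ k₂ μ Z τ T ω ≤
        ⨅ x : {x : EuclideanSpace ℝ (Fin (k₂ + 2)) // ‖x‖ = 1},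
          ∑ i, ∑ j, x.1 i * Ssamp m k₁ k₂ Z τ T a.1 ω i j * x.1 j
      refine le_ciInf fun x => ?_
      have hQd := Q_diff_bound m k₁ k₂ hZ hτmp a.2 x.2 T ω
      have h1 := (abs_le.mp hQd).1
      have h2 : lambdaMin (Smat m k₁ k₂ μ Z τ a.1)
          ≤ ∑ i, ∑ j, x.1 i * Smat m k₁ k₂ μ Z τ a.1 i j * x.1 j := by
        show (⨅ z : {z : EuclideanSpace ℝ (Fin (k₂ + 2)) // ‖z‖ = 1},
          ∑ i, ∑ j, z.1 i * Smat m k₁ k₂ μ Z τ a.1 i j * z.1 j) ≤ _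
        refine ciInf_le ⟨0, ?_⟩ x
        rintro y ⟨z, rfl⟩
        exact Qp_nonneg m k₁ k₂ hZ hτmp a.1 z.1
      have h3 := hLle a
      linarith
    have hkey : ∀ T : ℕ, L - Dsum m k₁ k₂ μ Z τ T ω ≤
        ⨅ a : {a : EuclideanSpace ℝ (Fin (k₁ + 1) × Fin m) // ‖a‖ = 1},
          lambdaMin (Ssamp m k₁ k₂ Z τ T a.1 ω) :=
      fun T => le_ciInf fun a => hper T a
    obtain ⟨a₀⟩ := hNE
    set x₀ : {x : EuclideanSpace ℝ (Fin (k₂ + 2)) // ‖x‖ = 1} := Classical.arbitrary _ with hx₀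
    set C : ℝ := ∑ i, ∑ j, x₀.1 i * Smat m k₁ k₂ μ Z τ a₀.1 i j * x₀.1 j with hC
    have hub : ∀ᶠ T in atTop,
        (⨅ a : {a : EuclideanSpace ℝ (Fin (k₁ + 1) × Fin m) // ‖a‖ = 1},
          lambdaMin (Ssamp m k₁ k₂ Z τ T a.1 ω)) ≤ C + 1 := by
      have hev1 : ∀ᶠ T in atTop, Dsum m k₁ k₂ μ Z τ T ω ≤ 1 :=
        hΔ0.eventually (eventually_le_nhds one_pos)
      filter_upwards [hev1] with T hT
      have hstep1 : (⨅ a : {a : EuclideanSpace ℝ (Fin (k₁ + 1) × Fin m) // ‖a‖ = 1},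
          lambdaMin (Ssamp m k₁ k₂ Z τ T a.1 ω)) ≤ lambdaMin (Ssamp m k₁ k₂ Z τ T a₀.1 ω) := by
        refine ciInf_le ⟨L - Dsum m k₁ k₂ μ Z τ T ω, ?_⟩ a₀
        rintro y ⟨b, rfl⟩
        exact hper T b
      have hstep2 : lambdaMin (Ssamp m k₁ k₂ Z τ T a₀.1 ω)
          ≤ ∑ i, ∑ j, x₀.1 i * Ssamp m k₁ k₂ Z τ T a₀.1 ω i j * x₀.1 j := by
        show (⨅ z : {z : EuclideanSpace ℝ (Fin (k₂ + 2)) // ‖z‖ = 1},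
          ∑ i, ∑ j, z.1 i * Ssamp m k₁ k₂ Z τ T a₀.1 ω i j * z.1 j) ≤ _
        refine ciInf_le ⟨-(Dsum m k₁ k₂ μ Z τ T ω), ?_⟩ x₀
        rintro y ⟨z, rfl⟩
        have hQd := Q_diff_bound m k₁ k₂ hZ hτmp a₀.2 z.2 T ω
        have h1 := (abs_le.mp hQd).1
        have h2 := Qp_nonneg m k₁ k₂ hZ hτmp a₀.1 z.1
        linarith
      have hstep3 : ∑ i, ∑ j, x₀.1 i * Ssamp m k₁ k₂ Z τ T a₀.1 ω i j * x₀.1 j ≤ C + 1 := by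
        have hQd := Q_diff_bound m k₁ k₂ hZ hτmp a₀.2 x₀.2 T ω
        have h1 := (abs_le.mp hQd).2
        rw [hC]
        linarith
      linarith
    have hBdd : IsBoundedUnder (· ≤ ·) atTop
        (fun T => ⨅ a : {a : EuclideanSpace ℝ (Fin (k₁ + 1) × Fin m) // ‖a‖ = 1},
          lambdaMin (Ssamp m k₁ k₂ Z τ T a.1 ω)) := ⟨C + 1, eventually_map.mpr hub⟩
    have hcob := hBdd.isCoboundedUnder_ge
    refine le_of_forall_pos_le_add fun ε hε => ?_
    have hevε : ∀ᶠ T in atTop, Dsum m k₁ k₂ μ Z τ T ω ≤ ε :=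
      hΔ0.eventually (eventually_le_nhds hε)
    have h5 : L - ε ≤ liminf (fun T => ⨅ a : {a : EuclideanSpace ℝ (Fin (k₁ + 1) × Fin m) // ‖a‖ = 1},
        lambdaMin (Ssamp m k₁ k₂ Z τ T a.1 ω)) atTop := by
      refine le_liminf_of_le hcob ?_
      filter_upwards [hevε] with T hT
      have := hkey T
      linarith
    linarith


end ODPC
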